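/- Let G be a locally finite connected infinite graph and T an end-faithful spanning tree of G. For each edge e ∈ E(G)\E(T) let C_e be the unique (fundamental) cycle in T ∪ {e}. Then the family {C_e} is locally finite: every edge of G lies in only finitely many of the cycles C_e. -/

import Mathlib

/-- A ray in a graph: an injective sequence of successively adjacent vertices. -/
def SimpleGraph.IsRay {V : Type*} (G : SimpleGraph V) (f : ℕ → V) : Prop :=
  Function.Injective f ∧ ∀ n, G.Adj (f n) (f (n + 1))

/-- Two rays are equivalent if some third ray meets both infinitely often. -/
def SimpleGraph.RaysEquiv {V : Type*} (G : SimpleGraph V) (r s : ℕ → V) : Prop :=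
  ∃ t : ℕ → V, G.IsRay t ∧ {n | ∃ m, r m = t n}.Infinite ∧ {n | ∃ m, s m = t n}.Infinite

/-- A spanning subgraph `T` of `G` is end faithful if the natural map from ends of `T`
to ends of `G` is a bijection: two rays of `T` are equivalent in `G` iff they are
equivalent in `T`, and every ray of `G` is equivalent in `G` to a ray of `T`. -/
def EndFaithful {V : Type*} (G T : SimpleGraph V) : Prop :=
  (∀ r s : ℕ → V, T.IsRay r → T.IsRay s → (G.RaysEquiv r s ↔ T.RaysEquiv r s)) ∧
  (∀ r : ℕ → V, G.IsRay r → ∃ s : ℕ → V, T.IsRay s ∧ G.RaysEquiv r s)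

open SimpleGraph Walk

namespace SG18

variable {V : Type*}

/-- Append two paths whose only common vertex is the junction. -/
lemma isPath_append {G : SimpleGraph V} {u v w : V} {p : G.Walk u v} {q : G.Walk v w}
    (hp : p.IsPath) (hq : q.IsPath)
    (h : ∀ z, z ∈ p.support → z ∈ q.support → z = v) : (p.append q).IsPath := by
  rw [Walk.isPath_def, Walk.support_append, List.nodup_append]
  refine ⟨hp.support_nodup, hq.support_nodup.tail, ?_⟩
  intro z hz z' hz' hzz'
  subst hzz'
  have hz2 : z ∈ q.support := List.mem_of_mem_tail hz'
  have := h z hz hz2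
  subst this
  have : q.support = z :: q.support.tail := by
    have := q.support_eq_cons
    simpa using this
  have hnd := hq.support_nodup
  rw [this] at hnd
  exact (List.nodup_cons.mp hnd).1 hz'

/-- Decomposing reachability of a walk all of whose edges are `s(u,v)` or edges of `D`. -/
lemma walk_decomp {G D : SimpleGraph V} {a b u v : V} (p : G.Walk a b)
    (hp : ∀ q ∈ p.edges, q = s(u, v) ∨ q ∈ D.edgeSet) :
    D.Reachable a b ∨ (D.Reachable a u ∧ D.Reachable v b) ∨
      (D.Reachable a v ∧ D.Reachable u b) := by
  induction p with
  | nil => exact Or.inl (Reachable.refl _)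
  | @cons a c b hadj q ih =>
    have h1 := hp s(a, c) (by simp)
    have ih' := ih (fun e he => hp e (by simp [he]))
    rcases h1 with h1 | h1
    · rw [Sym2.eq_iff] at h1
      rcases h1 with ⟨rfl, rfl⟩ | ⟨rfl, rfl⟩
      · rcases ih' with h | ⟨h1, h2⟩ | ⟨h1, h2⟩
        · exact Or.inr (Or.inl ⟨Reachable.refl _, h⟩)
        · exact Or.inr (Or.inl ⟨Reachable.refl _, h2⟩)
        · exact Or.inl h2
      · rcases ih' with h | ⟨h1', h2⟩ | ⟨h1', h2⟩
        · exact Or.inr (Or.inr ⟨Reachable.refl _, h⟩)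
        · exact Or.inl h2
        · exact Or.inr (Or.inr ⟨Reachable.refl _, h2⟩)
    · have hDadj : D.Adj a c := h1
      rcases ih' with h | ⟨h1', h2⟩ | ⟨h1', h2⟩
      · exact Or.inl (hDadj.reachable.trans h)
      · exact Or.inr (Or.inl ⟨hDadj.reachable.trans h1', h2⟩)
      · exact Or.inr (Or.inr ⟨hDadj.reachable.trans h1', h2⟩)

end SG18

namespace SG18B
open SG18

variable {V : Type*}

/-- `z` lies on the (unique) path from `x` to `m` in `D`. -/
def OnPath (D : SimpleGraph V) (x z m : V) : Prop :=
  ∃ p : D.Walk x m, p.IsPath ∧ z ∈ p.support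

variable {D : SimpleGraph V}

/-- The König step. -/
lemma konig_step
    (hu : ∀ ⦃a b : V⦄ (p q : D.Walk a b), p.IsPath → q.IsPath → p = q)
    (hnf : ∀ v : V, (D.neighborSet v).Finite) (x : V) (M : Set V)
    {v : V} (hv : {m ∈ M | OnPath D x v m}.Infinite) :
    ∃ w : V, D.Adj v w ∧ {m ∈ M | OnPath D x w m}.Infinite ∧
      ∀ q : D.Walk x v, q.IsPath → w ∉ q.support := by
  classical
  obtain ⟨m0, hm0⟩ := hv.nonempty
  obtain ⟨p0, hp0, hv0⟩ := hm0.2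
  let qv : D.Walk x v := p0.takeUntil v hv0
  have hqv : qv.IsPath := hp0.takeUntil hv0
  have hN' : {m ∈ M | OnPath D x v m ∧ m ∉ qv.support}.Infinite := by
    have : {m ∈ M | OnPath D x v m ∧ m ∉ qv.support} ⊇
        {m ∈ M | OnPath D x v m} \ {z | z ∈ qv.support} := by
      rintro m ⟨⟨h1, h2⟩, h3⟩; exact ⟨h1, h2, h3⟩
    exact ((hv.diff (qv.support.finite_toSet)).mono this)
  set N' := {m ∈ M | OnPath D x v m ∧ m ∉ qv.support} with hN'def
  -- for each m ∈ N', define the successor of v on the path to m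
  have hstep : ∀ m : N', ∃ w : V, w ∈ D.neighborSet v ∧
      ∃ (p : D.Walk x (m : V)) (hvp : v ∈ p.support), p.IsPath ∧
        w ∈ (p.dropUntil v hvp).support.tail := by
    rintro ⟨m, hmM, ⟨p, hp, hvp⟩, hmq⟩
    have hvm : v ≠ m := by
      rintro rfl; exact hmq (qv.end_mem_support)
    have hd : ¬ (p.dropUntil v hvp).Nil := Walk.not_nil_of_ne hvm
    have hadj : D.Adj v ((p.dropUntil v hvp).getVert 1) := Walk.adj_snd hd
    refine ⟨(p.dropUntil v hvp).getVert 1, hadj, p, hvp, hp, ?_⟩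
    have h1 : (p.dropUntil v hvp).getVert 1 ∈ (p.dropUntil v hvp).support := by
      rw [Walk.mem_support_iff_exists_getVert]
      refine ⟨1, rfl, ?_⟩
      have := Walk.not_nil_iff_lt_length.mp hd
      omega
    rw [(p.dropUntil v hvp).support_eq_cons] at h1
    rcases List.mem_cons.mp h1 with h | h
    · exact absurd h.symm hadj.ne
    · exact h
  choose wfn hwnb pfn hvfn hpfn htl using hstep
  have hN'inf : Infinite N' := hN'.to_subtype
  have hnbf : Finite (D.neighborSet v) := (hnf v).to_subtype
  obtain ⟨⟨w, hwnb'⟩, hfib⟩ :=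
    Finite.exists_infinite_fiber (fun m : N' => (⟨wfn m, hwnb m⟩ : D.neighborSet v))
  have hfibw : ∀ a : ((fun m : N' => (⟨wfn m, hwnb m⟩ : D.neighborSet v)) ⁻¹' {⟨w, hwnb'⟩}),
      wfn a = w := by
    rintro ⟨a, ha⟩
    simpa [Subtype.ext_iff] using ha
  refine ⟨w, hwnb', ?_, ?_⟩
  · refine Set.infinite_of_injective_forall_mem
      (f := fun a : ((fun m : N' => (⟨wfn m, hwnb m⟩ : D.neighborSet v)) ⁻¹' {⟨w, hwnb'⟩}) =>
        ((a : N') : V)) ?_ ?_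
    · exact Subtype.val_injective.comp Subtype.val_injective
    · rintro a
      refine ⟨(a : N').2.1, pfn a, hpfn a, ?_⟩
      have := htl a
      rw [hfibw a] at this
      exact Walk.support_dropUntil_subset _ _ (List.mem_of_mem_tail this)
  · intro q hq
    have hq' : q = qv := hu q qv hq hqv
    subst hq'
    obtain ⟨a⟩ := @Nonempty.map _ _ id (@Infinite.nonempty _ hfib)
    intro hwq
    -- w lies in the tail of the drop part of path `pfn a`, and in its take part: contradiction
    have hvp := hvfn a
    have hp := hpfn a
    have htl' := htl a
    rw [hfibw a] at htl'
    have htake : ((pfn a).takeUntil v hvp) = qv :=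
      hu _ _ (hp.takeUntil hvp) hqv
    have hnd := hp.support_nodup
    rw [← Walk.take_spec (pfn a) hvp, Walk.support_append, List.nodup_append] at hnd
    exact hnd.2.2 w (htake ▸ hwq) w htl' rfl

/-- König's lemma: a ray through infinitely many markers at every stage. -/
lemma konig (hu : ∀ ⦃a b : V⦄ (p q : D.Walk a b), p.IsPath → q.IsPath → p = q)
    (hnf : ∀ v : V, (D.neighborSet v).Finite) (x : V) (M : Set V)
    (hM : M.Infinite) (hMr : ∀ m ∈ M, D.Reachable x m) :
    ∃ r : ℕ → V, r 0 = x ∧ (∀ n, D.Adj (r n) (r (n + 1))) ∧ Function.Injective r ∧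
      (∀ n, ∃ p : D.Walk x (r n), p.IsPath ∧ p.length = n ∧
        ∀ z, z ∈ p.support ↔ ∃ i ≤ n, z = r i) ∧
      (∀ n, {m ∈ M | OnPath D x (r n) m}.Infinite) := by
  classical
  have hx : {m ∈ M | OnPath D x x m}.Infinite := by
    refine hM.mono fun m hm => ⟨hm, (hMr m hm).some.bypass, Walk.bypass_isPath _,
      Walk.start_mem_support _⟩
  choose step hadj hinf hnm using fun (v : V) (hv : {m ∈ M | OnPath D x v m}.Infinite) =>
    konig_step hu hnf x M hv
  let R : ℕ → {v : V // {m ∈ M | OnPath D x v m}.Infinite} := fun n =>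
    Nat.rec ⟨x, hx⟩ (fun _ p => ⟨step p.1 p.2, hinf p.1 p.2⟩) n
  have hRadj : ∀ n, D.Adj (R n).1 (R (n + 1)).1 := fun n => hadj (R n).1 (R n).2
  have key : ∀ n, ∃ p : D.Walk x (R n).1, p.IsPath ∧ p.length = n ∧
      ∀ z, z ∈ p.support ↔ ∃ i ≤ n, z = (R i).1 := by
    intro n
    induction n with
    | zero =>
      refine ⟨Walk.nil, Walk.IsPath.nil, rfl, fun z => ?_⟩
      simp only [Walk.support_nil, List.mem_singleton]
      constructor
      · rintro rfl; exact ⟨0, le_refl _, rfl⟩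
      · rintro ⟨i, hi, rfl⟩
        interval_cases i
        rfl
    | succ n ih =>
      obtain ⟨p, hp, hlen, hsupp⟩ := ih
      have hnotmem : (R (n + 1)).1 ∉ p.support := hnm (R n).1 (R n).2 p hp
      let q : D.Walk (R n).1 (R (n + 1)).1 := Walk.cons (hRadj n) Walk.nil
      have hq : q.IsPath := by
        rw [Walk.isPath_def]
        simp [q, (hRadj n).ne]
      refine ⟨p.append q, isPath_append hp hq ?_, ?_, fun z => ?_⟩
      · intro z hzp hzq
        have hq' : q.support = [(R n).1, (R (n + 1)).1] := rfl
        rw [hq'] at hzq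
        rcases List.mem_cons.mp hzq with h | h
        · exact h
        · rw [List.mem_singleton] at h
          exact absurd (h ▸ hzp) hnotmem
      · simp [q, hlen]
      · rw [Walk.mem_support_append_iff]
        constructor
        · rintro (hz | hz)
          · obtain ⟨i, hi, rfl⟩ := (hsupp z).mp hz
            exact ⟨i, by omega, rfl⟩
          · have hq' : q.support = [(R n).1, (R (n + 1)).1] := rfl
            rw [hq'] at hz
            rcases List.mem_cons.mp hz with h | h
            · exact ⟨n, by omega, h⟩
            · exact ⟨n + 1, le_refl _, List.mem_singleton.mp h⟩
        · rintro ⟨i, hi, rfl⟩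
          rcases Nat.lt_or_ge i (n + 1) with h | h
          · exact Or.inl ((hsupp _).mpr ⟨i, by omega, rfl⟩)
          · have : i = n + 1 := by omega
            subst this
            right
            have hq' : q.support = [(R n).1, (R (n + 1)).1] := rfl
            rw [hq']
            exact List.mem_cons.mpr (Or.inr (List.mem_singleton.mpr rfl))
  have hinj : ∀ i n, i < n → (R i).1 ≠ (R n).1 := by
    intro i n hilt heq
    obtain ⟨pi, hpi, hleni, -⟩ := key i
    obtain ⟨pn, hpn, hlenn, -⟩ := key n
    have := hu (pi.copy rfl heq) pn ((pi.isPath_copy rfl heq).mpr hpi) hpn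
    have hl : (pi.copy rfl heq).length = pn.length := by rw [this]
    rw [Walk.length_copy, hleni, hlenn] at hl
    omega
  refine ⟨fun n => (R n).1, rfl, hRadj, ?_, ?_, fun n => (R n).2⟩
  · intro i j hij
    by_contra hne
    rcases Nat.lt_or_ge i j with h | h
    · exact hinj i j h hij
    · exact hinj j i (by omega) hij.symm
  · exact key

end SG18B

namespace SG18C
open SG18 SG18B

variable {V : Type*} {D : SimpleGraph V}

/-- If `z` is on a path `p : x ⤳ w` and `y` is on the part of `p` after `z`, then there is a
path from `x` to `y` through `z`. -/
lemma path_through [DecidableEq V] {x w z y : V} {p : D.Walk x w} (hp : p.IsPath) (hz : z ∈ p.support)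
    (hy : y ∈ (p.dropUntil z hz).support) :
    ∃ q : D.Walk x y, q.IsPath ∧ z ∈ q.support ∧ q.support ⊆ p.support := by
  have hy' : y ∈ ((p.dropUntil z hz).takeUntil y hy).support := Walk.end_mem_support _
  refine ⟨(p.takeUntil z hz).append ((p.dropUntil z hz).takeUntil y hy),
    isPath_append (hp.takeUntil hz) ((hp.dropUntil hz).takeUntil hy) ?_, ?_, ?_⟩
  · intro c hc1 hc2
    have hc2' : c ∈ (p.dropUntil z hz).support :=
      Walk.support_takeUntil_subset _ _ hc2
    rw [(p.dropUntil z hz).support_eq_cons] at hc2'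
    rcases List.mem_cons.mp hc2' with h | h
    · exact h
    · exfalso
      have hnd := hp.support_nodup
      rw [← Walk.take_spec p hz, Walk.support_append, List.nodup_append] at hnd
      exact hnd.2.2 c hc1 c h rfl
  · rw [Walk.mem_support_append_iff]
    exact Or.inl (Walk.end_mem_support _)
  · intro c hc
    rw [Walk.mem_support_append_iff] at hc
    rcases hc with hc | hc
    · exact Walk.support_takeUntil_subset _ _ hc
    · exact Walk.support_dropUntil_subset _ _ (Walk.support_takeUntil_subset _ _ hc)

/-- Existence of walks along a ray. -/
lemma raySeg_exists {r : ℕ → V} (hrinj : Function.Injective r)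
    (hradj : ∀ n, D.Adj (r n) (r (n + 1))) (a k : ℕ) :
    ∃ p : D.Walk (r a) (r (a + k)), p.IsPath ∧
      ∀ z, z ∈ p.support ↔ ∃ i, a ≤ i ∧ i ≤ a + k ∧ z = r i := by
  induction k with
  | zero =>
    refine ⟨Walk.nil, Walk.IsPath.nil, fun z => ?_⟩
    simp only [Walk.support_nil, List.mem_singleton]
    constructor
    · rintro rfl; exact ⟨a, le_refl _, by omega, rfl⟩
    · rintro ⟨i, h1, h2, rfl⟩
      have : i = a := by omega
      subst this; rfl
  | succ k ih =>
    obtain ⟨p, hp, hsupp⟩ := ih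
    have hadj : D.Adj (r (a + k)) (r (a + (k + 1))) := hradj (a + k)
    let q : D.Walk (r (a + k)) (r (a + (k + 1))) := Walk.cons hadj Walk.nil
    have hq' : q.support = [r (a + k), r (a + (k + 1))] := rfl
    have hnotmem : r (a + (k + 1)) ∉ p.support := by
      intro h
      obtain ⟨i, h1, h2, heq⟩ := (hsupp _).mp h
      have := hrinj heq.symm
      omega
    refine ⟨p.append q, isPath_append hp ?_ ?_, fun z => ?_⟩
    · rw [Walk.isPath_def, hq']
      simp [hadj.ne]
    · intro z hzp hzq
      rw [hq'] at hzq
      rcases List.mem_cons.mp hzq with h | h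
      · exact h
      · rw [List.mem_singleton] at h
        exact absurd (h ▸ hzp) hnotmem
    · rw [Walk.mem_support_append_iff]
      constructor
      · rintro (hz | hz)
        · obtain ⟨i, h1, h2, rfl⟩ := (hsupp z).mp hz
          exact ⟨i, h1, by omega, rfl⟩
        · rw [hq'] at hz
          rcases List.mem_cons.mp hz with h | h
          · exact ⟨a + k, by omega, by omega, h⟩
          · exact ⟨a + (k + 1), by omega, le_refl _, List.mem_singleton.mp h⟩
      · rintro ⟨i, h1, h2, rfl⟩
        rcases Nat.lt_or_ge i (a + k + 1) with h | h
        · exact Or.inl ((hsupp _).mpr ⟨i, h1, by omega, rfl⟩)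
        · have : i = a + (k + 1) := by omega
          subst this
          exact Or.inr (by rw [hq']; exact List.mem_cons.mpr (Or.inr (List.mem_singleton.mpr rfl)))

end SG18C

namespace SG18D
open SG18 SG18B SG18C

variable {V : Type*} {D : SimpleGraph V}

lemma getVert_inj {G : SimpleGraph V} {u v : V} {p : G.Walk u v} (hp : p.IsPath) :
    ∀ {i j : ℕ}, i ≤ p.length → j ≤ p.length → p.getVert i = p.getVert j → i = j := by
  induction p with
  | nil => intro i j hi hj _; simp at hi hj; omega
  | @cons a b c hadj q ih =>
    intro i j hi hj hij
    rw [Walk.cons_isPath_iff] at hp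
    match i, j with
    | 0, 0 => rfl
    | 0, j + 1 =>
      exfalso
      rw [Walk.length_cons] at hj
      have : q.getVert j ∈ q.support :=
        Walk.mem_support_iff_exists_getVert.mpr ⟨j, rfl, by omega⟩
      rw [Walk.getVert_cons_succ] at hij
      simp only [Walk.getVert_zero] at hij
      exact hp.2 (hij ▸ this)
    | i + 1, 0 =>
      exfalso
      rw [Walk.length_cons] at hi
      have : q.getVert i ∈ q.support :=
        Walk.mem_support_iff_exists_getVert.mpr ⟨i, rfl, by omega⟩
      rw [Walk.getVert_cons_succ] at hij
      simp only [Walk.getVert_zero] at hij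
      exact hp.2 (hij ▸ this)
    | i + 1, j + 1 =>
      rw [Walk.length_cons] at hi hj
      rw [Walk.getVert_cons_succ, Walk.getVert_cons_succ] at hij
      have := ih hp.1 (by omega) (by omega) hij
      omega

lemma raySeg_exists' {r : ℕ → V} (hrinj : Function.Injective r)
    (hradj : ∀ n, D.Adj (r n) (r (n + 1))) {a b : ℕ} (hab : a ≤ b) :
    ∃ p : D.Walk (r a) (r b), p.IsPath ∧
      ∀ z, z ∈ p.support ↔ ∃ i, a ≤ i ∧ i ≤ b ∧ z = r i := by
  obtain ⟨p, hp, hsupp⟩ := raySeg_exists hrinj hradj a (b - a)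
  have hb : a + (b - a) = b := by omega
  refine ⟨p.copy rfl (by rw [hb]), (p.isPath_copy _ _).mpr hp, fun z => ?_⟩
  rw [Walk.support_copy]
  rw [hsupp z]
  constructor
  · rintro ⟨i, h1, h2, rfl⟩; exact ⟨i, h1, by omega, rfl⟩
  · rintro ⟨i, h1, h2, rfl⟩; exact ⟨i, h1, by omega, rfl⟩

end SG18D

open SimpleGraph Walk SG18 SG18B SG18C SG18D in
theorem stmt18 {V : Type*} (G : SimpleGraph V) (hlf : G.LocallyFinite)
    (hconn : G.Connected) (hinf : Infinite V)
    (T : SimpleGraph V) (hTG : T ≤ G) (hT : T.IsTree) (hfaith : EndFaithful G T) :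
    ∀ f : Sym2 V,
      {e : Sym2 V | e ∈ G.edgeSet ∧ e ∉ T.edgeSet ∧
        ∃ (v : V) (c : G.Walk v v), c.IsCycle ∧
          (∀ e' ∈ c.edges, e' = e ∨ e' ∈ T.edgeSet) ∧ f ∈ c.edges}.Finite := by
  classical
  intro f
  by_cases hfT : f ∈ T.edgeSet
  swap
  · -- if f is not a tree edge, every such e equals f
    apply Set.Finite.subset (Set.finite_singleton f)
    rintro e ⟨heG, heT, w, c, hc, hce, hfc⟩
    rcases hce f hfc with h | h
    · exact h ▸ rfl
    · exact absurd h hfT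
  induction f using Sym2.ind with | _ x y => ?_
  rw [SimpleGraph.mem_edgeSet] at hfT
  by_contra hfin
  have hSinf : Set.Infinite {e : Sym2 V | e ∈ G.edgeSet ∧ e ∉ T.edgeSet ∧
      ∃ (v : V) (c : G.Walk v v), c.IsCycle ∧
        (∀ e' ∈ c.edges, e' = e ∨ e' ∈ T.edgeSet) ∧ s(x, y) ∈ c.edges} := hfin
  clear hfin
  set S := {e : Sym2 V | e ∈ G.edgeSet ∧ e ∉ T.edgeSet ∧
      ∃ (v : V) (c : G.Walk v v), c.IsCycle ∧
        (∀ e' ∈ c.edges, e' = e ∨ e' ∈ T.edgeSet) ∧ s(x, y) ∈ c.edges} with hSdef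
  have hTac : T.IsAcyclic := hT.2
  set D := T.deleteEdges {s(x, y)} with hDdef
  have hDT : D ≤ T := SimpleGraph.deleteEdges_le _
  have hDG : D ≤ G := le_trans hDT hTG
  have hDac : D.IsAcyclic := by
    intro v c hc
    exact hTac (c.mapLe hDT) ((Walk.mapLe_isCycle hDT).mpr hc)
  have hu : ∀ ⦃a b : V⦄ (p q : D.Walk a b), p.IsPath → q.IsPath → p = q := by
    intro a b p q hp hq
    have := (SimpleGraph.isAcyclic_iff_path_unique.mp hDac) ⟨p, hp⟩ ⟨q, hq⟩
    exact congrArg Subtype.val this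
  have huT : ∀ ⦃a b : V⦄ (p q : T.Walk a b), p.IsPath → q.IsPath → p = q := by
    intro a b p q hp hq
    have := (SimpleGraph.isAcyclic_iff_path_unique.mp hTac) ⟨p, hp⟩ ⟨q, hq⟩
    exact congrArg Subtype.val this
  have hnf : ∀ v : V, (D.neighborSet v).Finite := by
    intro v
    have : D.neighborSet v ⊆ G.neighborSet v := fun w hw => hDG hw
    exact Set.Finite.subset (G.neighborSet v).toFinite this
  have hxyD : ¬ D.Reachable x y := by
    have hbr : T.IsBridge s(x, y) :=
      SimpleGraph.isAcyclic_iff_forall_adj_isBridge.mp hTac hfT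
    exact SimpleGraph.isBridge_iff.mp hbr
  set A : Set V := {z | D.Reachable x z} with hAdef
  set B : Set V := {z | D.Reachable y z} with hBdef
  have hAB : ∀ z, z ∈ A → z ∈ B → False := by
    intro z ha hb
    exact hxyD (ha.trans hb.symm)
  have hDedge : ∀ q : Sym2 V, q ∈ T.edgeSet → q ≠ s(x, y) → q ∈ D.edgeSet := by
    intro q hq hne
    rw [hDdef, SimpleGraph.edgeSet_deleteEdges]
    exact ⟨hq, by simpa using hne⟩
  have hcover : ∀ z, z ∈ A ∨ z ∈ B := by
    intro z
    obtain ⟨p⟩ := hT.1.preconnected x z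
    have hdec := walk_decomp (D := D) (u := x) (v := y) p ?_
    · rcases hdec with h | ⟨h1, h2⟩ | ⟨h1, h2⟩
      · exact Or.inl h
      · exact Or.inr h2
      · exact absurd h1 hxyD
    · intro q hq
      by_cases hqe : q = s(x, y)
      · exact Or.inl hqe
      · exact Or.inr (hDedge q (p.edges_subset_edgeSet hq) hqe)
  -- closure of A and B under D-adjacency
  have hAclosed : ∀ a b, D.Adj a b → a ∈ A → b ∈ A := fun a b h ha => ha.trans h.reachable
  have hBclosed : ∀ a b, D.Adj a b → a ∈ B → b ∈ B := fun a b h hb => hb.trans h.reachable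
  -- every edge in S crosses the cut (A, B)
  have hcross : ∀ e ∈ S, ∃ u v : V, e = s(u, v) ∧ G.Adj u v ∧ u ∈ A ∧ v ∈ B := by
    intro e he
    obtain ⟨heG, heT, w, c, hc, hce, hfc⟩ := he
    have hediag : ¬ e.IsDiag := G.not_isDiag_of_mem_edgeSet heG
    set H := T ⊔ SimpleGraph.fromEdgeSet {e} with hHdef
    have hcH : ∀ e' ∈ c.edges, e' ∈ H.edgeSet := by
      intro e' he'
      rw [hHdef, SimpleGraph.edgeSet_sup, SimpleGraph.edgeSet_fromEdgeSet]
      rcases hce e' he' with h | h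
      · exact Or.inr ⟨by simp [h], by rw [h]; exact hediag⟩
      · exact Or.inl h
    have hc' : (c.transfer H hcH).IsCycle := hc.transfer hcH
    have hfc' : s(x, y) ∈ (c.transfer H hcH).edges := by
      rwa [Walk.edges_transfer]
    have hkey := (SimpleGraph.adj_and_reachable_delete_edges_iff_exists_cycle
      (G := H) (v := x) (w := y)).mpr ⟨w, c.transfer H hcH, hc', hfc'⟩
    obtain ⟨p⟩ := hkey.2
    induction e using Sym2.ind with | _ u v => ?_
    have hpe : ∀ q ∈ p.edges, q = s(u, v) ∨ q ∈ D.edgeSet := by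
      intro q hq
      have hq1 : q ∈ (H \ SimpleGraph.fromEdgeSet {s(x, y)}).edgeSet := p.edges_subset_edgeSet hq
      rw [SimpleGraph.edgeSet_sdiff, SimpleGraph.edgeSet_fromEdgeSet] at hq1
      obtain ⟨hq2, hq3⟩ := hq1
      rw [hHdef, SimpleGraph.edgeSet_sup, SimpleGraph.edgeSet_fromEdgeSet] at hq2
      have hqxy : q ≠ s(x, y) := by
        intro hcon
        refine hq3 ⟨by simp [hcon], fun hdiag => ?_⟩
        rw [hcon] at hdiag
        exact hfT.ne (Sym2.mk_isDiag_iff.mp hdiag)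
      rcases hq2 with h | h
      · exact Or.inr (hDedge q h hqxy)
      · exact Or.inl h.1
    have hdec := walk_decomp (D := D) (u := u) (v := v) p hpe
    have hGuv : G.Adj u v := (SimpleGraph.mem_edgeSet G).mp heG
    rcases hdec with h | ⟨h1, h2⟩ | ⟨h1, h2⟩
    · exact absurd h hxyD
    · exact ⟨u, v, rfl, hGuv, h1, h2.symm⟩
    · exact ⟨v, u, Sym2.eq_swap, hGuv.symm, h1, h2.symm⟩
  -- choose endpoints for each crossing edge
  choose cu cv hcs hcadj hcuA hcvB using hcross
  have hSsub : Infinite ↥S := hSinf.to_subtype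
  -- the set of A-side endpoints is infinite
  set MA : Set V := Set.range (fun e : ↥S => cu e.1 e.2) with hMAdef
  have hMA : MA.Infinite := by
    by_contra hfinA
    rw [Set.not_infinite] at hfinA
    have hKfin : (⋃ m ∈ MA, (fun b => (m, b)) '' (G.neighborSet m)).Finite :=
      Set.Finite.biUnion hfinA (fun m _ => Set.Finite.image _ (G.neighborSet m).toFinite)
    have hinf2 := Set.infinite_of_injective_forall_mem
      (f := fun e : ↥S => (cu e.1 e.2, cv e.1 e.2))
      (s := ⋃ m ∈ MA, (fun b => (m, b)) '' (G.neighborSet m)) ?_ ?_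
    · exact hinf2 hKfin
    · intro e1 e2 he
      rw [Prod.mk.injEq] at he
      have h1 : e1.1 = e2.1 := by
        rw [hcs e1.1 e1.2, hcs e2.1 e2.2, he.1, he.2]
      exact Subtype.ext h1
    · intro e
      refine Set.mem_biUnion ⟨e, rfl⟩ ⟨cv e.1 e.2, hcadj e.1 e.2, rfl⟩
  have hMAr : ∀ m ∈ MA, D.Reachable x m := by
    rintro m ⟨e, rfl⟩
    exact hcuA e.1 e.2
  obtain ⟨r, hr0, hradj, hrinj, hrkey, hrinf⟩ := konig hu hnf x MA hMA hMAr
  -- pull back the marker property to edge indices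
  have hFA : ∀ a : ℕ, {e : ↥S | OnPath D x (r a) (cu e.1 e.2)}.Infinite := by
    intro a
    by_contra hfin'
    rw [Set.not_infinite] at hfin'
    refine (hrinf a) (Set.Finite.subset (hfin'.image (fun e => cu e.1 e.2)) ?_)
    rintro m ⟨⟨e, rfl⟩, hop⟩
    exact ⟨e, hop, rfl⟩
  choose jj hjj using fun a => (hFA a).nonempty
  -- B-side markers
  set MB : Set V := Set.range (fun a : ℕ => cv (jj a).1 (jj a).2) with hMBdef
  have hMB : MB.Infinite := by
    by_contra hfinB
    rw [Set.not_infinite] at hfinB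
    have hKfin : (⋃ m ∈ MB, (fun b => (b, m)) '' (G.neighborSet m)).Finite :=
      Set.Finite.biUnion hfinB (fun m _ => Set.Finite.image _ (G.neighborSet m).toFinite)
    have : Finite ↥(⋃ m ∈ MB, (fun b => (b, m)) '' (G.neighborSet m)) := hKfin.to_subtype
    obtain ⟨⟨⟨p1, p2⟩, hp12⟩, hfib⟩ := Finite.exists_infinite_fiber
      (f := fun a : ℕ => (⟨(cu (jj a).1 (jj a).2, cv (jj a).1 (jj a).2), by
        refine Set.mem_biUnion ⟨a, rfl⟩ ⟨cu (jj a).1 (jj a).2, (hcadj _ _).symm, rfl⟩⟩ :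
        ↥(⋃ m ∈ MB, (fun b => (b, m)) '' (G.neighborSet m))))
    -- all the a's in the fiber have r a on the unique path to p1 : contradiction
    have hfib' : Set.Infinite {a : ℕ | cu (jj a).1 (jj a).2 = p1} := by
      refine Set.Infinite.mono ?_ (Set.infinite_coe_iff.mp hfib)
      rintro a ha
      simp only [Set.mem_preimage, Set.mem_singleton_iff, Subtype.ext_iff] at ha
      have := congrArg Prod.fst ha
      exact this
    obtain ⟨a0, ha0⟩ := hfib'.nonempty
    obtain ⟨q0, hq0, hq0mem⟩ := hjj a0
    refine (hfib'.mono ?_ : Set.Infinite (r ⁻¹' {z | z ∈ q0.support}))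
      (Set.Finite.preimage hrinj.injOn q0.support.finite_toSet)
    intro a ha
    obtain ⟨q1, hq1, hq1mem⟩ := hjj a
    have hend : cu (jj a).1 (jj a).2 = cu (jj a0).1 (jj a0).2 := by
      rw [Set.mem_setOf_eq] at ha ha0
      rw [ha, ha0]
    have heq : q1.copy rfl hend = q0 := hu _ _ ((q1.isPath_copy rfl hend).mpr hq1) hq0
    rw [Set.mem_preimage, Set.mem_setOf_eq, ← heq, Walk.support_copy]
    exact hq1mem
  have hMBr : ∀ m ∈ MB, D.Reachable y m := by
    rintro m ⟨a, rfl⟩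
    exact hcvB (jj a).1 (jj a).2
  obtain ⟨s, hs0, hsadj, hsinj, hskey, hsinf⟩ := konig hu hnf y MB hMB hMBr
  have hGB : ∀ b : ℕ, {a : ℕ | OnPath D y (s b) (cv (jj a).1 (jj a).2)}.Infinite := by
    intro b
    by_contra hfin'
    rw [Set.not_infinite] at hfin'
    refine (hsinf b) (Set.Finite.subset (hfin'.image (fun a => cv (jj a).1 (jj a).2)) ?_)
    rintro m ⟨⟨a, rfl⟩, hop⟩
    exact ⟨a, hop, rfl⟩
  -- attachment machinery
  have hattgen : ∀ (r' : ℕ → V) (x' : V), Function.Injective r' → r' 0 = x' →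
      ∀ (w : V), D.Reachable x' w → ∃ (p : D.Walk x' w) (a : ℕ), p.IsPath ∧
        (r' a ∈ p.support ∧ ∀ i, r' i ∈ p.support → i ≤ a) := by
    intro r' x' hinj h0 w hw
    have hp : (hw.some.bypass).IsPath := Walk.bypass_isPath _
    have hIfin : {i : ℕ | r' i ∈ hw.some.bypass.support}.Finite :=
      Set.Finite.preimage hinj.injOn hw.some.bypass.support.finite_toSet
    have hIne : {i : ℕ | r' i ∈ hw.some.bypass.support}.Nonempty :=
      ⟨0, by rw [Set.mem_setOf_eq, h0]; exact Walk.start_mem_support _⟩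
    exact ⟨hw.some.bypass, sSup {i | r' i ∈ hw.some.bypass.support}, hp,
      Nat.sSup_mem hIne hIfin.bddAbove, fun i hi => le_csSup hIfin.bddAbove hi⟩
  choose PA aA hPA hPAmem using hattgen r x hrinj hr0
  choose PB aB hPB hPBmem using hattgen s y hsinj hs0
  have hrA : ∀ i, r i ∈ A := fun i => (hrkey i).choose.reachable
  have hsB : ∀ i, s i ∈ B := fun i => (hskey i).choose.reachable
  have hattA_ray : ∀ (i : ℕ) (h : r i ∈ A), aA (r i) h = i := by
    intro i h
    obtain ⟨p, hp, hlen, hsupp⟩ := hrkey i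
    have hPeq : PA (r i) h = p := hu _ _ (hPA _ _) hp
    have h1 := (hPAmem (r i) h).1
    rw [hPeq] at h1
    obtain ⟨j, hji, hj⟩ := (hsupp _).mp h1
    have hA1 : aA (r i) h = j := hrinj hj
    have h2 : i ≤ aA (r i) h := by
      refine (hPAmem (r i) h).2 i ?_
      rw [hPeq]
      exact (hsupp _).mpr ⟨i, le_refl _, rfl⟩
    omega
  have hattB_ray : ∀ (i : ℕ) (h : s i ∈ B), aB (s i) h = i := by
    intro i h
    obtain ⟨p, hp, hlen, hsupp⟩ := hskey i
    have hPeq : PB (s i) h = p := hu _ _ (hPB _ _) hp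
    have h1 := (hPBmem (s i) h).1
    rw [hPeq] at h1
    obtain ⟨j, hji, hj⟩ := (hsupp _).mp h1
    have hA1 : aB (s i) h = j := hsinj hj
    have h2 : i ≤ aB (s i) h := by
      refine (hPBmem (s i) h).2 i ?_
      rw [hPeq]
      exact (hsupp _).mpr ⟨i, le_refl _, rfl⟩
    omega
  have hbelowA : ∀ (w) (hw : w ∈ A) (a' : ℕ), OnPath D x (r a') w → a' ≤ aA w hw := by
    rintro w hw a' ⟨p, hp, hmem⟩
    have heq : p = PA w hw := hu _ _ hp (hPA _ _)
    rw [heq] at hmem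
    exact (hPAmem w hw).2 a' hmem
  have hbelowB : ∀ (w) (hw : w ∈ B) (b' : ℕ), OnPath D y (s b') w → b' ≤ aB w hw := by
    rintro w hw b' ⟨p, hp, hmem⟩
    have heq : p = PB w hw := hu _ _ hp (hPB _ _)
    rw [heq] at hmem
    exact (hPBmem w hw).2 b' hmem
  have hdescA : ∀ (w) (hw : w ∈ A) (z),
      z ∈ ((PA w hw).dropUntil (r (aA w hw)) (hPAmem w hw).1).support →
      ∃ hz : z ∈ A, aA z hz = aA w hw := by
    intro w hw z hz
    obtain ⟨q, hq, hmem, hsub⟩ := path_through (hPA w hw) (hPAmem w hw).1 hz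
    have hzA : z ∈ A := q.reachable
    have hqP : q = PA z hzA := hu _ _ hq (hPA _ _)
    refine ⟨hzA, le_antisymm ?_ ?_⟩
    · refine (hPAmem w hw).2 _ (hsub ?_)
      rw [hqP]
      exact (hPAmem z hzA).1
    · refine (hPAmem z hzA).2 _ ?_
      rw [← hqP]
      exact hmem
  have hdescB : ∀ (w) (hw : w ∈ B) (z),
      z ∈ ((PB w hw).dropUntil (s (aB w hw)) (hPBmem w hw).1).support →
      ∃ hz : z ∈ B, aB z hz = aB w hw := by
    intro w hw z hz
    obtain ⟨q, hq, hmem, hsub⟩ := path_through (hPB w hw) (hPBmem w hw).1 hz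
    have hzB : z ∈ B := q.reachable
    have hqP : q = PB z hzB := hu _ _ hq (hPB _ _)
    refine ⟨hzB, le_antisymm ?_ ?_⟩
    · refine (hPBmem w hw).2 _ (hsub ?_)
      rw [hqP]
      exact (hPBmem z hzB).1
    · refine (hPBmem z hzB).2 _ ?_
      rw [← hqP]
      exact hmem
  -- convenient edge transfer for D-walks into G
  have hDWG : ∀ {a b : V} (w : D.Walk a b), ∀ e ∈ w.edges, e ∈ G.edgeSet :=
    fun w e he => SimpleGraph.edgeSet_mono hDG (w.edges_subset_edgeSet he)
  -- one stage of the construction of the connecting ray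
  have hstage : ∀ (α β : ℕ) (C : G.Walk (r 0) (r α)), C.IsPath →
      (∀ z, z ∈ C.support → ∀ hz : z ∈ A, aA z hz ≤ α) →
      (∀ z, z ∈ C.support → ∀ hz : z ∈ B, aB z hz ≤ β) →
      ∃ (α' β' : ℕ) (C' : G.Walk (r 0) (r α')), α < α' ∧ β < β' ∧ C'.IsPath ∧
        C.length < C'.length ∧
        (∀ n, n ≤ C.length → C'.getVert n = C.getVert n) ∧
        (∃ n, C.length < n ∧ n ≤ C'.length ∧ ∃ m, C'.getVert n = s m) ∧
        (∀ z, z ∈ C'.support → ∀ hz : z ∈ A, aA z hz ≤ α') ∧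
        (∀ z, z ∈ C'.support → ∀ hz : z ∈ B, aB z hz ≤ β') := by
    intro α β C hC hCA hCB
    obtain ⟨a₁, ha₁G, ha₁gt⟩ := (hGB (β + 1)).exists_gt α
    set u₁ := cu (jj a₁).1 (jj a₁).2 with hu₁def
    set v₁ := cv (jj a₁).1 (jj a₁).2 with hv₁def
    have hu₁A : u₁ ∈ A := hcuA _ _
    have hv₁B : v₁ ∈ B := hcvB _ _
    have he₁ : G.Adj u₁ v₁ := hcadj _ _
    set α₁ := aA u₁ hu₁A with hα₁def
    set β₁ := aB v₁ hv₁B with hβ₁def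
    have hα₁ : α < α₁ := lt_of_lt_of_le ha₁gt (hbelowA u₁ hu₁A a₁ (hjj a₁))
    have hβ₁ : β < β₁ := lt_of_lt_of_le (Nat.lt_succ_self β) (hbelowB v₁ hv₁B (β + 1) ha₁G)
    obtain ⟨a₂, ha₂G, ha₂gt⟩ := (hGB (β₁ + 1)).exists_gt α₁
    set u₂ := cu (jj a₂).1 (jj a₂).2 with hu₂def
    set v₂ := cv (jj a₂).1 (jj a₂).2 with hv₂def
    have hu₂A : u₂ ∈ A := hcuA _ _
    have hv₂B : v₂ ∈ B := hcvB _ _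
    have he₂ : G.Adj u₂ v₂ := hcadj _ _
    set α₂ := aA u₂ hu₂A with hα₂def
    set β₂ := aB v₂ hv₂B with hβ₂def
    have hα₂ : α₁ < α₂ := lt_of_lt_of_le ha₂gt (hbelowA u₂ hu₂A a₂ (hjj a₂))
    have hβ₂ : β₁ < β₂ := lt_of_lt_of_le (Nat.lt_succ_self β₁) (hbelowB v₂ hv₂B (β₁ + 1) ha₂G)
    -- the walk pieces
    obtain ⟨W1, hW1, hW1supp⟩ := raySeg_exists' (D := D) hrinj hradj hα₁.le
    set W2 := (PA u₁ hu₁A).dropUntil (r α₁) (hPAmem u₁ hu₁A).1 with hW2def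
    have hW2path : W2.IsPath := (hPA u₁ hu₁A).dropUntil _
    have hW2supp : ∀ z ∈ W2.support, ∃ hz : z ∈ A, aA z hz = α₁ := hdescA u₁ hu₁A
    set W4 := ((PB v₁ hv₁B).dropUntil (s β₁) (hPBmem v₁ hv₁B).1).reverse with hW4def
    have hW4path : W4.IsPath := ((hPB v₁ hv₁B).dropUntil _).reverse
    have hW4supp : ∀ z ∈ W4.support, ∃ hz : z ∈ B, aB z hz = β₁ := by
      intro z hz
      rw [hW4def, Walk.support_reverse, List.mem_reverse] at hz
      exact hdescB v₁ hv₁B z hz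
    obtain ⟨W5, hW5, hW5supp⟩ := raySeg_exists' (D := D) hsinj hsadj hβ₂.le
    set W6 := (PB v₂ hv₂B).dropUntil (s β₂) (hPBmem v₂ hv₂B).1 with hW6def
    have hW6path : W6.IsPath := (hPB v₂ hv₂B).dropUntil _
    have hW6supp : ∀ z ∈ W6.support, ∃ hz : z ∈ B, aB z hz = β₂ := hdescB v₂ hv₂B
    set W8 := ((PA u₂ hu₂A).dropUntil (r α₂) (hPAmem u₂ hu₂A).1).reverse with hW8def
    have hW8path : W8.IsPath := ((hPA u₂ hu₂A).dropUntil _).reverse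
    have hW8supp : ∀ z ∈ W8.support, ∃ hz : z ∈ A, aA z hz = α₂ := by
      intro z hz
      rw [hW8def, Walk.support_reverse, List.mem_reverse] at hz
      exact hdescA u₂ hu₂A z hz
    -- assembled D-walks
    set WD1 : D.Walk (r α) u₁ := W1.append W2 with hWD1def
    set WD2 : D.Walk v₁ v₂ := W4.append (W5.append W6) with hWD2def
    have hWD1path : WD1.IsPath := by
      refine isPath_append hW1 hW2path ?_
      intro z hz1 hz2
      obtain ⟨i, hi1, hi2, rfl⟩ := (hW1supp z).mp hz1
      obtain ⟨hz, hzeq⟩ := hW2supp _ hz2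
      have : aA (r i) hz = i := hattA_ray i hz
      rw [this] at hzeq
      rw [hzeq]
    have hW56path : (W5.append W6).IsPath := by
      refine isPath_append hW5 hW6path ?_
      intro z hz1 hz2
      obtain ⟨i, hi1, hi2, rfl⟩ := (hW5supp z).mp hz1
      obtain ⟨hz, hzeq⟩ := hW6supp _ hz2
      have : aB (s i) hz = i := hattB_ray i hz
      rw [this] at hzeq
      rw [hzeq]
    have hWD2path : WD2.IsPath := by
      refine isPath_append hW4path hW56path ?_
      intro z hz1 hz2
      obtain ⟨hz, hzeq⟩ := hW4supp _ hz1
      rw [Walk.mem_support_append_iff] at hz2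
      rcases hz2 with hz2 | hz2
      · obtain ⟨i, hi1, hi2, rfl⟩ := (hW5supp z).mp hz2
        have : aB (s i) hz = i := hattB_ray i hz
        rw [this] at hzeq
        rw [hzeq]
      · obtain ⟨hz', hzeq'⟩ := hW6supp _ hz2
        have : aB z hz = aB z hz' := rfl
        rw [this, hzeq'] at hzeq
        omega
    have hWD2B : ∀ z ∈ WD2.support, z ∈ B := by
      intro z hz
      rw [hWD2def, Walk.mem_support_append_iff] at hz
      rcases hz with hz | hz
      · exact (hW4supp _ hz).1
      · rw [Walk.mem_support_append_iff] at hz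
        rcases hz with hz | hz
        · obtain ⟨i, _, _, rfl⟩ := (hW5supp z).mp hz
          exact hsB i
        · exact (hW6supp _ hz).1
    -- transfer to G and glue in the crossing edges
    set WG1 : G.Walk (r α) u₁ := WD1.transfer G (hDWG WD1) with hWG1def
    set WG2 : G.Walk v₁ v₂ := WD2.transfer G (hDWG WD2) with hWG2def
    set WG8 : G.Walk u₂ (r α₂) := W8.transfer G (hDWG W8) with hWG8def
    set Y : G.Walk v₂ (r α₂) := Walk.cons he₂.symm WG8 with hYdef
    set Z : G.Walk v₁ (r α₂) := WG2.append Y with hZdef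
    set W : G.Walk (r α) (r α₂) := WG1.append (Walk.cons he₁ Z) with hWdef
    have hYsupp : Y.support = v₂ :: W8.support := by
      rw [hYdef, Walk.support_cons, hWG8def, Walk.support_transfer]
    have hYpath : Y.IsPath := by
      refine (hW8path.transfer _).cons ?_
      rw [Walk.support_transfer]
      intro hmem
      obtain ⟨hz, _⟩ := hW8supp _ hmem
      exact hAB _ hz hv₂B
    have hZpath : Z.IsPath := by
      refine isPath_append (hWD2path.transfer _) hYpath ?_
      intro z hz1 hz2
      rw [Walk.support_transfer] at hz1
      rw [hYsupp] at hz2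
      rcases List.mem_cons.mp hz2 with h | h
      · exact h
      · obtain ⟨hz, _⟩ := hW8supp _ h
        exact absurd (hWD2B _ hz1) (fun hb => hAB _ hz hb)
    have hZsupp : ∀ z ∈ Z.support, z ∈ B ∨ ∃ hz : z ∈ A, aA z hz = α₂ := by
      intro z hz
      rw [hZdef, Walk.mem_support_append_iff] at hz
      rcases hz with hz | hz
      · rw [Walk.support_transfer] at hz
        exact Or.inl (hWD2B _ hz)
      · rw [hYsupp] at hz
        rcases List.mem_cons.mp hz with h | h
        · exact Or.inl (h ▸ hv₂B)
        · exact Or.inr (hW8supp _ h)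
    have hconsZpath : (Walk.cons he₁ Z).IsPath := by
      refine hZpath.cons ?_
      intro hmem
      rcases hZsupp _ hmem with h | ⟨hz, hzeq⟩
      · exact hAB _ hu₁A h
      · have : aA u₁ hz = α₁ := rfl
        rw [this] at hzeq
        omega
    have hWD1supp : ∀ z ∈ WD1.support,
        (∃ i, α ≤ i ∧ i ≤ α₁ ∧ z = r i) ∨ ∃ hz : z ∈ A, aA z hz = α₁ := by
      intro z hz
      rw [hWD1def, Walk.mem_support_append_iff] at hz
      rcases hz with hz | hz
      · exact Or.inl ((hW1supp z).mp hz)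
      · exact Or.inr (hW2supp _ hz)
    have hWD1A : ∀ z ∈ WD1.support, ∃ hz : z ∈ A, aA z hz ≤ α₁ := by
      intro z hz
      rcases hWD1supp _ hz with ⟨i, hi1, hi2, rfl⟩ | ⟨hz', hzeq⟩
      · refine ⟨hrA i, ?_⟩
        rw [hattA_ray i (hrA i)]
        exact hi2
      · exact ⟨hz', le_of_eq hzeq⟩
    have hWpath : W.IsPath := by
      refine isPath_append (hWD1path.transfer _) hconsZpath ?_
      intro z hz1 hz2
      rw [Walk.support_transfer] at hz1
      rw [Walk.support_cons] at hz2
      rcases List.mem_cons.mp hz2 with h | h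
      · exact h
      · exfalso
        obtain ⟨hzA, hzle⟩ := hWD1A _ hz1
        rcases hZsupp _ h with hB | ⟨hz', hzeq⟩
        · exact hAB _ hzA hB
        · have : aA z hzA = aA z hz' := rfl
          rw [this, hzeq] at hzle
          omega
    have hWsupp : ∀ z ∈ W.support,
        (∃ i, α ≤ i ∧ i ≤ α₁ ∧ z = r i) ∨
        (∃ hz : z ∈ A, aA z hz = α₁ ∨ aA z hz = α₂) ∨
        (∃ hz : z ∈ B, β₁ ≤ aB z hz ∧ aB z hz ≤ β₂) := by
      intro z hz
      rw [hWdef, Walk.mem_support_append_iff] at hz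
      rcases hz with hz | hz
      · rw [Walk.support_transfer] at hz
        rcases hWD1supp _ hz with h | ⟨hz', hzeq⟩
        · exact Or.inl h
        · exact Or.inr (Or.inl ⟨hz', Or.inl hzeq⟩)
      · rw [Walk.support_cons] at hz
        rcases List.mem_cons.mp hz with h | h
        · subst h
          exact Or.inr (Or.inl ⟨hu₁A, Or.inl rfl⟩)
        · rw [hZdef, Walk.mem_support_append_iff] at h
          rcases h with h | h
          · rw [Walk.support_transfer] at h
            rw [hWD2def, Walk.mem_support_append_iff] at h
            rcases h with h | h
            · obtain ⟨hz', hzeq⟩ := hW4supp _ h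
              exact Or.inr (Or.inr ⟨hz', le_of_eq hzeq.symm, hzeq.le.trans hβ₂.le⟩)
            · rw [Walk.mem_support_append_iff] at h
              rcases h with h | h
              · obtain ⟨i, hi1, hi2, rfl⟩ := (hW5supp z).mp h
                refine Or.inr (Or.inr ⟨hsB i, ?_, ?_⟩) <;> rw [hattB_ray i (hsB i)]
                · exact hi1
                · exact hi2
              · obtain ⟨hz', hzeq⟩ := hW6supp _ h
                exact Or.inr (Or.inr ⟨hz', hβ₂.le.trans (le_of_eq hzeq.symm), le_of_eq hzeq⟩)
          · rw [hYsupp] at h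
            rcases List.mem_cons.mp h with h | h
            · subst h
              exact Or.inr (Or.inr ⟨hv₂B, hβ₂.le.trans (le_refl _), le_refl _⟩)
            · exact Or.inr (Or.inl ⟨(hW8supp _ h).1, Or.inr (hW8supp _ h).2⟩)
    -- the extended walk
    set C' : G.Walk (r 0) (r α₂) := C.append W with hC'def
    have hC'path : C'.IsPath := by
      refine isPath_append hC hWpath ?_
      intro z hz1 hz2
      rcases hWsupp _ hz2 with ⟨i, hi1, hi2, rfl⟩ | ⟨hz, hzeq⟩ | ⟨hz, hzle, _⟩
      · have := hCA _ hz1 (hrA i)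
        rw [hattA_ray i (hrA i)] at this
        have : i = α := by omega
        rw [this]
      · exfalso
        have := hCA _ hz1 hz
        omega
      · exfalso
        have := hCB _ hz1 hz
        omega
    refine ⟨α₂, β₂, C', hα₁.trans hα₂, hβ₁.trans hβ₂, hC'path, ?_, ?_, ?_, ?_, ?_⟩
    · -- length increases
      rw [hC'def, Walk.length_append, hWdef, Walk.length_append, Walk.length_cons]
      omega
    · -- stability of getVert
      intro n hn
      rw [hC'def, Walk.getVert_append]
      rcases Nat.lt_or_ge n C.length with h | h
      · rw [if_pos h]
      · have hn' : n = C.length := by omega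
        rw [if_neg (by omega), hn']
        simp only [Nat.sub_self]
        rw [Walk.getVert_zero, Walk.getVert_length]
    · -- a visit to the ray s strictly beyond the old length
      have hsmem : s β₁ ∈ C'.support := by
        rw [hC'def, Walk.mem_support_append_iff]
        right
        rw [hWdef, Walk.mem_support_append_iff]
        right
        rw [Walk.support_cons]
        refine List.mem_cons.mpr (Or.inr ?_)
        rw [hZdef, Walk.mem_support_append_iff]
        left
        rw [Walk.support_transfer, hWD2def, Walk.mem_support_append_iff]
        left
        rw [hW4def, Walk.support_reverse, List.mem_reverse]
        exact Walk.start_mem_support _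
      obtain ⟨n, hgv, hn⟩ := Walk.mem_support_iff_exists_getVert.mp hsmem
      refine ⟨n, ?_, hn, β₁, hgv.symm ▸ rfl⟩
      · by_contra hcon
        push_neg at hcon
        have hstab : C'.getVert n = C.getVert n := by
          rw [hC'def, Walk.getVert_append]
          rcases Nat.lt_or_ge n C.length with h | h
          · rw [if_pos h]
          · have hn' : n = C.length := by omega
            rw [if_neg (by omega), hn']
            simp only [Nat.sub_self]
            rw [Walk.getVert_zero, Walk.getVert_length]
        have hmem : s β₁ ∈ C.support := by
          rw [← hgv, hstab]
          exact Walk.mem_support_iff_exists_getVert.mpr ⟨n, rfl, by omega⟩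
        have := hCB _ hmem (hsB β₁)
        rw [hattB_ray β₁ (hsB β₁)] at this
        omega
    · -- A-attachment invariant
      intro z hz hzA
      rw [hC'def, Walk.mem_support_append_iff] at hz
      rcases hz with hz | hz
      · exact (hCA _ hz hzA).trans (hα₁.le.trans hα₂.le)
      · rcases hWsupp _ hz with ⟨i, hi1, hi2, rfl⟩ | ⟨hz', hzeq⟩ | ⟨hz', _, _⟩
        · rw [hattA_ray i hzA]
          omega
        · have : aA z hzA = aA z hz' := rfl
          rw [this]
          omega
        · exact absurd hz' (fun h => hAB _ hzA h)
    · -- B-attachment invariant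
      intro z hz hzB
      rw [hC'def, Walk.mem_support_append_iff] at hz
      rcases hz with hz | hz
      · exact (hCB _ hz hzB).trans (hβ₁.le.trans hβ₂.le)
      · rcases hWsupp _ hz with ⟨i, hi1, hi2, rfl⟩ | ⟨hz', hzeq⟩ | ⟨hz', hble, hble2⟩
        · exact absurd (hrA i) (fun h => hAB _ h hzB)
        · exact absurd hz' (fun h => hAB _ h hzB)
        · have : aB z hzB = aB z hz' := rfl
          rw [this]
          omega
  choose α' β' C' hlt1 hlt2 hpath' hlen' hstab' hvisit' hIA' hIB' using hstage
  -- the base state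
  have hnil1 : ∀ z, z ∈ (Walk.nil : G.Walk (r 0) (r 0)).support → ∀ hz : z ∈ A,
      aA z hz ≤ 0 := by
    intro z hz hzA
    rw [Walk.support_nil, List.mem_singleton] at hz
    subst hz
    rw [hattA_ray 0 hzA]
  have hnil2 : ∀ z, z ∈ (Walk.nil : G.Walk (r 0) (r 0)).support → ∀ hz : z ∈ B,
      aB z hz ≤ 0 := by
    intro z hz hzB
    rw [Walk.support_nil, List.mem_singleton] at hz
    subst hz
    exact absurd hzB (fun h => hAB _ (hrA 0) h)
  -- iterate the stages
  let St := Σ' (p : ℕ × ℕ), {C : G.Walk (r 0) (r p.1) // C.IsPath ∧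
    (∀ z, z ∈ C.support → ∀ hz : z ∈ A, aA z hz ≤ p.1) ∧
    (∀ z, z ∈ C.support → ∀ hz : z ∈ B, aB z hz ≤ p.2)}
  let F : St → St := fun st =>
    ⟨(α' st.1.1 st.1.2 st.2.1 st.2.2.1 st.2.2.2.1 st.2.2.2.2,
      β' st.1.1 st.1.2 st.2.1 st.2.2.1 st.2.2.2.1 st.2.2.2.2),
     ⟨C' st.1.1 st.1.2 st.2.1 st.2.2.1 st.2.2.2.1 st.2.2.2.2,
      hpath' st.1.1 st.1.2 st.2.1 st.2.2.1 st.2.2.2.1 st.2.2.2.2,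
      hIA' st.1.1 st.1.2 st.2.1 st.2.2.1 st.2.2.2.1 st.2.2.2.2,
      hIB' st.1.1 st.1.2 st.2.1 st.2.2.1 st.2.2.2.1 st.2.2.2.2⟩⟩
  let seq : ℕ → St := fun n =>
    Nat.rec ⟨(0, 0), ⟨Walk.nil, Walk.IsPath.nil, hnil1, hnil2⟩⟩ (fun _ st => F st) n
  let Cs : (n : ℕ) → G.Walk (r 0) (r (seq n).1.1) := fun n => (seq n).2.1
  have hCspath : ∀ n, (Cs n).IsPath := fun n => (seq n).2.2.1
  have hlenmono : ∀ n, (Cs n).length < (Cs (n + 1)).length := by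
    intro n
    exact hlen' (seq n).1.1 (seq n).1.2 (seq n).2.1 (seq n).2.2.1 (seq n).2.2.2.1
      (seq n).2.2.2.2
  have hstab : ∀ n m, m ≤ (Cs n).length → (Cs (n + 1)).getVert m = (Cs n).getVert m := by
    intro n m hm
    exact hstab' (seq n).1.1 (seq n).1.2 (seq n).2.1 (seq n).2.2.1 (seq n).2.2.2.1
      (seq n).2.2.2.2 m hm
  have hvisit : ∀ n, ∃ k, (Cs n).length < k ∧ k ≤ (Cs (n + 1)).length ∧
      ∃ m, (Cs (n + 1)).getVert k = s m := by
    intro n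
    exact hvisit' (seq n).1.1 (seq n).1.2 (seq n).2.1 (seq n).2.2.1 (seq n).2.2.2.1
      (seq n).2.2.2.2
  have hLge : ∀ n, n ≤ (Cs n).length := by
    intro n
    induction n with
    | zero => omega
    | succ n ih => have := hlenmono n; omega
  have hstep2 : ∀ k j, k ≤ j → ∀ n, n ≤ (Cs k).length → (Cs j).getVert n = (Cs k).getVert n := by
    intro k j hkj
    induction j, hkj using Nat.le_induction with
    | base => intro n _; rfl
    | succ j hkj ih =>
      intro n hn
      have hlen2 : n ≤ (Cs j).length := by
        have : (Cs k).length ≤ (Cs j).length := by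
          clear ih hn
          induction j, hkj using Nat.le_induction with
          | base => omega
          | succ j hkj ih => have := hlenmono j; omega
        omega
      rw [hstab j n hlen2]
      exact ih n hn
  set t : ℕ → V := fun n => (Cs n).getVert n with htdef
  have hglob : ∀ k n, n ≤ (Cs k).length → (Cs k).getVert n = t n := by
    intro k n hn
    rcases le_or_gt k n with h | h
    · exact (hstep2 k n h n hn).symm
    · exact (hstep2 n k h.le n (hLge n)) ▸ rfl
  have htadj : ∀ n, G.Adj (t n) (t (n + 1)) := by
    intro n
    have h1 : n ≤ (Cs (n + 1)).length := by have := hLge (n + 1); omega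
    have h2 : n + 1 ≤ (Cs (n + 1)).length := hLge (n + 1)
    rw [← hglob (n + 1) n h1, ← hglob (n + 1) (n + 1) h2]
    exact Walk.adj_getVert_succ _ (by omega)
  have htinj : Function.Injective t := by
    intro m n hmn
    rcases le_or_gt m n with h | h
    · have h1 : m ≤ (Cs n).length := (hLge n).trans' (by omega)
      rw [← hglob n m h1, ← hglob n n (hLge n)] at hmn
      exact getVert_inj (hCspath n) h1 (hLge n) hmn
    · have h1 : n ≤ (Cs m).length := (hLge m).trans' (by omega)
      rw [← hglob m n h1, ← hglob m m (hLge m)] at hmn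
      exact getVert_inj (hCspath m) (hLge m) h1 hmn
  have htr : ∀ k, t ((Cs k).length) = r ((seq k).1.1) := by
    intro k
    rw [← hglob k _ (le_refl _)]
    exact Walk.getVert_length _
  have hrmeet : {n | ∃ m, r m = t n}.Infinite := by
    refine Set.infinite_of_forall_exists_gt ?_
    intro a
    refine ⟨(Cs (a + 1)).length, ?_, ?_⟩
    · show ∃ m, r m = t ((Cs (a + 1)).length)
      exact ⟨(seq (a + 1)).1.1, (htr (a + 1)).symm⟩
    · have := hLge (a + 1)
      omega
  have hsmeet : {n | ∃ m, s m = t n}.Infinite := by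
    refine Set.infinite_of_forall_exists_gt ?_
    intro a
    obtain ⟨k, hk1, hk2, m, hkm⟩ := hvisit a
    refine ⟨k, ?_, ?_⟩
    · show ∃ m, s m = t k
      refine ⟨m, ?_⟩
      rw [← hkm]
      exact hglob (a + 1) k hk2
    · have := hLge a
      omega
  -- the two tree rays and their equivalence
  have hrayr : T.IsRay r := ⟨hrinj, fun n => hDT (hradj n)⟩
  have hrays : T.IsRay s := ⟨hsinj, fun n => hDT (hsadj n)⟩
  have hGequiv : G.RaysEquiv r s := ⟨t, ⟨htinj, htadj⟩, hrmeet, hsmeet⟩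
  obtain ⟨t', ⟨ht'inj, ht'adj⟩, ht'r, ht's⟩ := (hfaith.1 r s hrayr hrays).mp hGequiv
  -- t' must cross the bridge infinitely often : contradiction
  have hNA : {n | t' n ∈ A}.Infinite := by
    refine ht'r.mono ?_
    rintro n ⟨m, hm⟩
    rw [Set.mem_setOf_eq, ← hm]
    exact hrA m
  have hNB : {n | t' n ∈ B}.Infinite := by
    refine ht's.mono ?_
    rintro n ⟨m, hm⟩
    rw [Set.mem_setOf_eq, ← hm]
    exact hsB m
  have hswitch : ∀ N : ℕ, ∃ n, N ≤ n ∧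
      ((t' n ∈ A ∧ t' (n + 1) ∈ B) ∨ (t' n ∈ B ∧ t' (n + 1) ∈ A)) := by
    intro N
    by_contra hcon
    push_neg at hcon
    have hconst : ∀ n, N ≤ n → (t' n ∈ A ↔ t' N ∈ A) := by
      intro n hn
      induction n, hn using Nat.le_induction with
      | base => rfl
      | succ n hn ih =>
        have hc := hcon n hn
        constructor
        · intro h1
          rcases hcover (t' n) with h | h
          · exact ih.mp h
          · exact (hc.2 h h1).elim
        · intro h1
          rcases hcover (t' (n + 1)) with h | h
          · exact h
          · exact (hc.1 (ih.mpr h1) h).elim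
    obtain ⟨n1, hn1A, hn1ge⟩ := hNA.exists_gt N
    obtain ⟨n2, hn2B, hn2ge⟩ := hNB.exists_gt N
    have h1 : t' N ∈ A := (hconst n1 hn1ge.le).mp hn1A
    have h2 : t' N ∈ A → False := by
      intro h
      exact hAB _ ((hconst n2 hn2ge.le).mpr h |> fun hA => hA) hn2B
    exact h2 h1
  have hxyval : ∀ n, ((t' n ∈ A ∧ t' (n + 1) ∈ B) ∨ (t' n ∈ B ∧ t' (n + 1) ∈ A)) →
      (t' n = x ∨ t' n = y) ∧ (t' (n + 1) = x ∨ t' (n + 1) = y) := by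
    intro n hn
    have hTadj : T.Adj (t' n) (t' (n + 1)) := ht'adj n
    by_cases hcs : s(t' n, t' (n + 1)) = s(x, y)
    · rw [Sym2.eq_iff] at hcs
      rcases hcs with ⟨h1, h2⟩ | ⟨h1, h2⟩
      · exact ⟨Or.inl h1, Or.inr h2⟩
      · exact ⟨Or.inr h1, Or.inl h2⟩
    · exfalso
      have hDadj : D.Adj (t' n) (t' (n + 1)) := by
        rw [hDdef, SimpleGraph.deleteEdges_adj]
        exact ⟨hTadj, by simpa using hcs⟩
      rcases hn with ⟨h1, h2⟩ | ⟨h1, h2⟩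
      · exact hAB _ (hAclosed _ _ hDadj h1) h2
      · exact hAB _ h2 (hBclosed _ _ hDadj h1)
  obtain ⟨n1, -, hsw1⟩ := hswitch 0
  obtain ⟨n2, hn2ge, hsw2⟩ := hswitch (n1 + 2)
  obtain ⟨hv1, hv2⟩ := hxyval n1 hsw1
  obtain ⟨hv3, -⟩ := hxyval n2 hsw2
  have hne12 : n1 ≠ n1 + 1 := by omega
  have hne13 : n1 ≠ n2 := by omega
  have hne23 : n1 + 1 ≠ n2 := by omega
  rcases hv1 with h1 | h1 <;> rcases hv2 with h2 | h2 <;> rcases hv3 with h3 | h3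
  · exact hne12 (ht'inj (h1.trans h2.symm))
  · exact hne12 (ht'inj (h1.trans h2.symm))
  · exact hne13 (ht'inj (h1.trans h3.symm))
  · exact hne23 (ht'inj (h2.trans h3.symm))
  · exact hne23 (ht'inj (h2.trans h3.symm))
  · exact hne13 (ht'inj (h1.trans h3.symm))
  · exact hne12 (ht'inj (h1.trans h2.symm))
  · exact hne12 (ht'inj (h1.trans h2.symm))
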